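/- Quantile recalibration with calibration map φ_DCP(α) = (1/(N'+1)) Σᵢ 1(Z'_i ≤ α) produces the same predictive distribution as Distributional Conformal Prediction with conformity score s_θ(y|x) = F_θ(y|x): for every α ∈ [0,1] and x, the recalibrated CDF F'_θ(·|x) = φ_DCP ∘ F_θ(·|x) has quantile function Q'_θ(α|x) = Q_θ(Z'_{(⌈(N'+1)α⌉)} | x), the DCP conformalized quantile. -/

import Mathlib

open MeasureTheory

/-- The `k`-th smallest value (1-indexed) among `{Z_1, …, Z_{N'}, +∞}` viewed in `EReal`
(with the conventions `k = 0 ↦ ⊥` and out-of-range `↦ ⊤`). -/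
noncomputable def augOrderStatE (N' : ℕ) (Z : Fin N' → ℝ) (k : ℕ) : EReal :=
  if k = 0 then ⊥
  else if h : k - 1 < N' + 1 then
    (Fin.snoc (fun i => ((Z i : ℝ) : EReal)) (⊤ : EReal) : Fin (N' + 1) → EReal)
      (Tuple.sort
        (Fin.snoc (fun i => ((Z i : ℝ) : EReal)) (⊤ : EReal) : Fin (N' + 1) → EReal)
        ⟨k - 1, h⟩)
  else ⊤

/-- The `k`-th sorted value of `f` (0-indexed `k-1`) is `≤ t` iff at least `k` values are `≤ t`. -/
private theorem sorted_le_iff_card {m : ℕ} (f : Fin m → EReal) (k : ℕ) (hk0 : k ≠ 0)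
    (hk : k - 1 < m) (t : EReal) :
    f (Tuple.sort f ⟨k - 1, hk⟩) ≤ t ↔
      k ≤ (Finset.univ.filter (fun j => f j ≤ t)).card := by
  have hmono := Tuple.monotone_sort f
  have hcard : (Finset.univ.filter (fun j => f (Tuple.sort f j) ≤ t)).card
      = (Finset.univ.filter (fun j => f j ≤ t)).card := by
    rw [← Fintype.card_subtype, ← Fintype.card_subtype]
    exact Fintype.card_congr ((Tuple.sort f).subtypeEquiv (fun j => Iff.rfl))
  rw [← hcard]
  constructor
  · intro h
    calc k = (Finset.Iic (⟨k - 1, hk⟩ : Fin m)).card := by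
            have hv : ((⟨k - 1, hk⟩ : Fin m) : ℕ) = k - 1 := rfl
            rw [Fin.card_Iic, hv]; omega
      _ ≤ _ := by
            apply Finset.card_le_card
            intro j hj
            simp only [Finset.mem_Iic] at hj
            simp only [Finset.mem_filter, Finset.mem_univ, true_and]
            exact le_trans (hmono hj) h
  · intro h
    by_contra hcon
    push_neg at hcon
    have hsub : (Finset.univ.filter (fun j => f (Tuple.sort f j) ≤ t))
        ⊆ Finset.Iio (⟨k - 1, hk⟩ : Fin m) := by
      intro j hj
      simp only [Finset.mem_filter, Finset.mem_univ, true_and] at hj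
      simp only [Finset.mem_Iio]
      by_contra hj2
      push_neg at hj2
      exact absurd (le_trans (hmono hj2) hj) (not_le.mpr hcon)
    have hle := Finset.card_le_card hsub
    have hv : ((⟨k - 1, hk⟩ : Fin m) : ℕ) = k - 1 := rfl
    rw [Fin.card_Iio, hv] at hle
    omega

private theorem card_snoc_filter {n : ℕ} (Z : Fin n → ℝ) (t : ℝ) :
    (Finset.univ.filter (fun j : Fin (n + 1) =>
        (Fin.snoc (fun i => ((Z i : ℝ) : EReal)) (⊤ : EReal) : Fin (n + 1) → EReal) j
          ≤ (t : EReal))).card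
      = (Finset.univ.filter (fun i : Fin n => Z i ≤ t)).card := by
  rw [← Nat.cast_id ((Finset.univ.filter (fun j : Fin (n + 1) =>
        (Fin.snoc (fun i => ((Z i : ℝ) : EReal)) (⊤ : EReal) : Fin (n + 1) → EReal) j
          ≤ (t : EReal))).card),
      ← Nat.cast_id ((Finset.univ.filter (fun i : Fin n => Z i ≤ t)).card),
      Finset.natCast_card_filter, Finset.natCast_card_filter, Fin.sum_univ_castSucc]
  simp [Fin.snoc_castSucc, Fin.snoc_last, EReal.coe_le_coe_iff]

private theorem snoc_eq_top_iff {n : ℕ} (Z : Fin n → ℝ) (j : Fin (n + 1)) :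
    (Fin.snoc (fun i => ((Z i : ℝ) : EReal)) (⊤ : EReal) : Fin (n + 1) → EReal) j = ⊤
      ↔ j = Fin.last n := by
  constructor
  · intro h
    by_contra hne
    obtain ⟨i, hi⟩ := Fin.exists_castSucc_eq.mpr hne
    rw [← hi, Fin.snoc_castSucc] at h
    exact EReal.coe_ne_top _ h
  · rintro rfl
    exact Fin.snoc_last _ _

private theorem sort_last_eq_top {n : ℕ} (Z : Fin n → ℝ) :
    (Fin.snoc (fun i => ((Z i : ℝ) : EReal)) (⊤ : EReal) : Fin (n + 1) → EReal)
      (Tuple.sort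
        (Fin.snoc (fun i => ((Z i : ℝ) : EReal)) (⊤ : EReal) : Fin (n + 1) → EReal)
        (Fin.last n)) = ⊤ := by
  set g := (Fin.snoc (fun i => ((Z i : ℝ) : EReal)) (⊤ : EReal) : Fin (n + 1) → EReal) with hg
  have h1 : g ((Tuple.sort g) ((Tuple.sort g).symm (Fin.last n))) = ⊤ := by
    rw [Equiv.apply_symm_apply]
    exact Fin.snoc_last _ _
  have h2 := Tuple.monotone_sort g (Fin.le_last ((Tuple.sort g).symm (Fin.last n)))
  simp only [Function.comp_apply] at h2
  rw [h1] at h2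
  exact top_le_iff.mp h2

private theorem sort_coe {n : ℕ} (Z : Fin n → ℝ) (k : ℕ) (hkn : k - 1 < n)
    (h : k - 1 < n + 1) :
    ∃ i : Fin n,
      (Fin.snoc (fun i => ((Z i : ℝ) : EReal)) (⊤ : EReal) : Fin (n + 1) → EReal)
        (Tuple.sort
          (Fin.snoc (fun i => ((Z i : ℝ) : EReal)) (⊤ : EReal) : Fin (n + 1) → EReal)
          ⟨k - 1, h⟩) = ((Z i : ℝ) : EReal) := by
  set g := (Fin.snoc (fun i => ((Z i : ℝ) : EReal)) (⊤ : EReal) : Fin (n + 1) → EReal) with hg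
  set j := Tuple.sort g ⟨k - 1, h⟩ with hj
  have hjne : j ≠ Fin.last n := by
    intro hjl
    have htop : g (Tuple.sort g ⟨k - 1, h⟩) = ⊤ := by
      rw [← hj, hjl]; exact Fin.snoc_last _ _
    have htop' : Tuple.sort g (Fin.last n) = Fin.last n :=
      (snoc_eq_top_iff Z _).mp (sort_last_eq_top Z)
    have : Tuple.sort g ⟨k - 1, h⟩ = Tuple.sort g (Fin.last n) := by
      rw [← hj, hjl, htop']
    have heq := (Tuple.sort g).injective this
    have : k - 1 = n := congrArg Fin.val heq
    omega
  obtain ⟨i, hi⟩ := Fin.exists_castSucc_eq.mpr hjne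
  refine ⟨i, ?_⟩
  show g j = _
  rw [← hi]
  exact Fin.snoc_castSucc _ _ _

/-- Quantile recalibration with the calibration map
`φ_DCP(α) = (1/(N'+1)) ∑ᵢ 1(Z'ᵢ ≤ α)` produces the same predictive distribution as
Distributional Conformal Prediction with conformity score `F_θ(y|x)`: for every
`α ∈ [0,1]` and every `x`, the quantile function of the recalibrated CDF
`φ_DCP ∘ F_θ(·|x)` (its generalized inverse, computed in `EReal`) equals the DCP
conformalized quantile `Q_θ(Z'_(⌈(N'+1)α⌉) | x)`. -/
theorem quantile_recalibration_eq_dcp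
    {𝒳 : Type*} (N' : ℕ) (hN' : 0 < N')
    (F Q : 𝒳 → ℝ → ℝ)
    (hFcont : ∀ x, Continuous (F x))
    (hFmono : ∀ x, StrictMono (F x))
    (hFrange : ∀ x y, F x y ∈ Set.Ioo (0 : ℝ) 1)
    (hFbot : ∀ x, Filter.Tendsto (F x) Filter.atBot (nhds 0))
    (hFtop : ∀ x, Filter.Tendsto (F x) Filter.atTop (nhds 1))
    (hQ : ∀ x, ∀ p ∈ Set.Ioo (0 : ℝ) 1, F x (Q x p) = p)
    (Z' : Fin N' → ℝ)
    (hZ' : ∀ i, Z' i ∈ Set.Ioo (0 : ℝ) 1)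
    (hZdist : Function.Injective Z')
    (QE : 𝒳 → EReal → EReal)
    (hQEbot : ∀ x, QE x ⊥ = ⊥) (hQEtop : ∀ x, QE x ⊤ = ⊤)
    (hQEcoe : ∀ x (r : ℝ), QE x (r : EReal) = ((Q x r : ℝ) : EReal)) :
    ∀ α ∈ Set.Icc (0 : ℝ) 1, ∀ x : 𝒳,
      sInf {y : EReal | ∃ r : ℝ, y = (r : EReal) ∧
          α ≤ (1 / ((N' : ℝ) + 1)) *
            ∑ i : Fin N', if Z' i ≤ F x r then (1 : ℝ) else 0} =
        QE x (augOrderStatE N' Z' ⌈((N' : ℝ) + 1) * α⌉₊) := by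
  intro α hα x
  obtain ⟨hα0, hα1⟩ := hα
  have hN1 : (0 : ℝ) < (N' : ℝ) + 1 := by positivity
  set k := ⌈((N' : ℝ) + 1) * α⌉₊ with hk
  have hcond : ∀ r : ℝ,
      (α ≤ (1 / ((N' : ℝ) + 1)) * ∑ i : Fin N', if Z' i ≤ F x r then (1 : ℝ) else 0)
      ↔ k ≤ (Finset.univ.filter (fun i => Z' i ≤ F x r)).card := by
    intro r
    rw [Finset.sum_boole, one_div, inv_mul_eq_div, le_div_iff₀ hN1, hk, Nat.ceil_le,
      mul_comm]
  by_cases hk0 : k = 0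
  · have hA : augOrderStatE N' Z' k = ⊥ := by rw [hk0]; simp [augOrderStatE]
    rw [hA, hQEbot]
    rw [sInf_eq_bot]
    intro b hb
    induction b using EReal.rec with
    | bot => exact absurd hb (lt_irrefl ⊥)
    | coe y =>
        refine ⟨((y - 1 : ℝ) : EReal), ⟨y - 1, rfl, (hcond _).mpr (by simp [hk0])⟩, ?_⟩
        exact_mod_cast sub_one_lt y
    | top =>
        exact ⟨((0 : ℝ) : EReal), ⟨0, rfl, (hcond _).mpr (by simp [hk0])⟩, EReal.coe_lt_top 0⟩
  · have hk1 : 1 ≤ k := Nat.one_le_iff_ne_zero.mpr hk0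
    have hkN : k ≤ N' + 1 := by
      rw [hk, Nat.ceil_le]
      push_cast
      nlinarith
    have h : k - 1 < N' + 1 := by omega
    have hA : augOrderStatE N' Z' k =
        (Fin.snoc (fun i => ((Z' i : ℝ) : EReal)) (⊤ : EReal) : Fin (N' + 1) → EReal)
          (Tuple.sort
            (Fin.snoc (fun i => ((Z' i : ℝ) : EReal)) (⊤ : EReal) : Fin (N' + 1) → EReal)
            ⟨k - 1, h⟩) := by
      unfold augOrderStatE
      rw [if_neg hk0, dif_pos h]
    by_cases hkn : k ≤ N'
    · -- the generic case: the order statistic is a real calibration value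
      obtain ⟨i, hi⟩ := sort_coe Z' k (by omega) h
      set w := Z' i with hwdef
      have hwI : w ∈ Set.Ioo (0 : ℝ) 1 := hZ' i
      have hQw : F x (Q x w) = w := hQ x w hwI
      have hchar : ∀ r : ℝ,
          (k ≤ (Finset.univ.filter (fun i => Z' i ≤ F x r)).card) ↔ w ≤ F x r := by
        intro r
        rw [← card_snoc_filter Z' (F x r), ← sorted_le_iff_card _ k hk0 h, hi,
          EReal.coe_le_coe_iff]
      have hrw_iff : ∀ r : ℝ, w ≤ F x r ↔ Q x w ≤ r := by
        intro r
        constructor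
        · intro hle
          by_contra hlt
          push_neg at hlt
          have := hFmono x hlt
          rw [hQw] at this
          exact absurd this (not_lt.mpr hle)
        · intro hle
          calc w = F x (Q x w) := hQw.symm
            _ ≤ F x r := (hFmono x).monotone hle
      rw [hA, hi, hQEcoe]
      apply le_antisymm
      · exact sInf_le ⟨Q x w, rfl, (hcond _).mpr ((hchar _).mpr ((hrw_iff _).mpr le_rfl))⟩
      · apply le_sInf
        rintro y ⟨r, rfl, hr⟩
        exact EReal.coe_le_coe_iff.mpr ((hrw_iff r).mp ((hchar r).mp ((hcond r).mp hr)))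
    · -- out of range: the order statistic is ⊤ and the constraint set is empty
      have hkeq : k = N' + 1 := by omega
      have hfin : (⟨k - 1, h⟩ : Fin (N' + 1)) = Fin.last N' := by
        ext; simp [hkeq, Fin.last]
      rw [hA, hfin, sort_last_eq_top, hQEtop]
      have hempty : {y : EReal | ∃ r : ℝ, y = (r : EReal) ∧
          α ≤ (1 / ((N' : ℝ) + 1)) *
            ∑ i : Fin N', if Z' i ≤ F x r then (1 : ℝ) else 0} = ∅ := by
        ext y
        simp only [Set.mem_setOf_eq, Set.mem_empty_iff_false, iff_false, not_exists]
        rintro r ⟨rfl, hr⟩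
        have hcardle : (Finset.univ.filter (fun i => Z' i ≤ F x r)).card ≤ N' := by
          have := Finset.card_filter_le (Finset.univ : Finset (Fin N'))
            (fun i => Z' i ≤ F x r)
          simpa using this
        have := (hcond r).mp hr
        omega
      rw [hempty, sInf_empty]
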